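/- arXiv:2008.06090 — 19 statements merged into one kernel-verified Lean document; each statement's English description precedes it below -/
import Mathlib

section
/- Let K be a graded r-submodule of the graded R-module M. Then every homogeneous element of the ideal (K :_R M) belongs to Z(M), i.e., h(R) ∩ (K :_R M) ⊆ Z(M). -/
/-!
Setting: `R` is a commutative ring graded by a group `ι` (written additively),
`M` is a graded `R`-module.  `𝒜 g` / `ℳ g` are the homogeneous components,
`SetLike.Homogeneous` expresses membership in `h(R)` resp. `h(M)`.
-/

open Pointwise

variable {ι : Type*} [DecidableEq ι] [AddGroup ι]
variable {R : Type*} [CommRing R] {M : Type*} [AddCommGroup M] [Module R M]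
variable (𝒜 : ι → AddSubgroup R) (ℳ : ι → AddSubgroup M)
variable [GradedRing 𝒜] [DirectSum.Decomposition ℳ] [SetLike.GradedSMul 𝒜 ℳ]

/-- A submodule `K` of `M` is graded if the homogeneous components of each of its
elements belong to `K`. -/
def IsGradedSub (K : Submodule R M) : Prop :=
  ∀ x ∈ K, ∀ i, (DirectSum.decompose ℳ x i : M) ∈ K

/-- An ideal `I` of `R` is graded if the homogeneous components of each of its
elements belong to `I`. -/
def IsGradedIdl (I : Ideal R) : Prop :=
  ∀ x ∈ I, ∀ i, (DirectSum.decompose 𝒜 x i : R) ∈ I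

/-- A proper graded submodule `K` of `M` is a graded `r`-submodule if whenever
`a ∈ h(R)` and `x ∈ h(M)` satisfy `a • x ∈ K` and `Ann_M(a) = {0}`, then `x ∈ K`. -/
def IsGrRSubmodule (K : Submodule R M) : Prop :=
  K ≠ ⊤ ∧ IsGradedSub ℳ K ∧
    ∀ a : R, ∀ x : M, SetLike.IsHomogeneousElem 𝒜 a → SetLike.IsHomogeneousElem ℳ x →
      a • x ∈ K → (∀ m : M, a • m = 0 → m = 0) → x ∈ K

/-- A proper graded submodule `K` of `M` is graded prime if whenever `a ∈ h(R)` and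
`x ∈ h(M)` satisfy `a • x ∈ K`, then `x ∈ K` or `a ∈ (K :_R M)`. -/
def IsGrPrimeSubmodule (K : Submodule R M) : Prop :=
  K ≠ ⊤ ∧ IsGradedSub ℳ K ∧
    ∀ a : R, ∀ x : M, SetLike.IsHomogeneousElem 𝒜 a → SetLike.IsHomogeneousElem ℳ x →
      a • x ∈ K → x ∈ K ∨ ∀ m : M, a • m ∈ K

/-- A proper graded submodule `K` of `M` is a graded special `r`-submodule if whenever
`a ∈ h(R)` and `x ∈ h(M)` satisfy `a • x ∈ K` and `Ann_R(x) = {0}`, then `a ∈ (K :_R M)`. -/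
def IsGrSpecialRSubmodule (K : Submodule R M) : Prop :=
  K ≠ ⊤ ∧ IsGradedSub ℳ K ∧
    ∀ a : R, ∀ x : M, SetLike.IsHomogeneousElem 𝒜 a → SetLike.IsHomogeneousElem ℳ x →
      a • x ∈ K → (∀ r : R, r • x = 0 → r = 0) → ∀ m : M, a • m ∈ K

/-- If `K` is a graded `r`-submodule of `M`, then
`h(R) ∩ (K :_R M) ⊆ Z(M)`, i.e. every homogeneous `a` with `a • M ⊆ K`
has nonzero annihilator in `M`. -/
theorem stmt0 [Nontrivial M] (K : Submodule R M) (hK : IsGrRSubmodule 𝒜 ℳ K) :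
    ∀ a : R, SetLike.IsHomogeneousElem 𝒜 a → (∀ m : M, a • m ∈ K) →
      ∃ m : M, m ≠ 0 ∧ a • m = 0 := by
  intro a ha haK
  classical
  by_contra h
  push_neg at h
  have hreg : ∀ m : M, a • m = 0 → m = 0 := by
    intro m hm
    by_contra hm0
    exact h m hm0 hm
  apply hK.1
  ext x
  simp only [Submodule.mem_top, iff_true]
  have : ∀ i, (DirectSum.decompose ℳ x i : M) ∈ K := by
    intro i
    exact hK.2.2 a _ ha ⟨i, (DirectSum.decompose ℳ x i).2⟩ (haK _) hreg
  rw [← DirectSum.sum_support_decompose ℳ x]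
  exact Submodule.sum_mem K fun i _ => this i
end

section
/- Let K be a graded prime R-submodule of the graded R-module M. Then K is a graded r-submodule of M if and only if h(R) ∩ (K :_R M) ⊆ Z(M). -/
/-!
Setting: `R` is a commutative ring graded by a group `ι` (written additively),
`M` is a graded `R`-module.  `𝒜 g` / `ℳ g` are the homogeneous components,
`SetLike.Homogeneous` expresses membership in `h(R)` resp. `h(M)`.
-/

open Pointwise

variable {ι : Type*} [DecidableEq ι] [AddGroup ι]
variable {R : Type*} [CommRing R] {M : Type*} [AddCommGroup M] [Module R M]
variable (𝒜 : ι → AddSubgroup R) (ℳ : ι → AddSubgroup M)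
variable [GradedRing 𝒜] [DirectSum.Decomposition ℳ] [SetLike.GradedSMul 𝒜 ℳ]

/-- A graded prime submodule `K` of `M` is a graded `r`-submodule
iff `h(R) ∩ (K :_R M) ⊆ Z(M)`. -/
theorem stmt1 [Nontrivial M] (K : Submodule R M) (hK : IsGrPrimeSubmodule 𝒜 ℳ K) :
    IsGrRSubmodule 𝒜 ℳ K ↔
      ∀ a : R, SetLike.IsHomogeneousElem 𝒜 a → (∀ m : M, a • m ∈ K) →
        ∃ m : M, m ≠ 0 ∧ a • m = 0 := by
  classical
  obtain ⟨hKtop, hKgr, hKp⟩ := hK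
  constructor
  · rintro ⟨-, -, hr⟩ a ha haK
    by_contra h
    push_neg at h
    have hann : ∀ m : M, a • m = 0 → m = 0 := by
      intro m hm
      by_contra hm0
      exact h m hm0 hm
    apply hKtop
    ext x
    simp only [Submodule.mem_top, iff_true]
    have : ∀ i, (DirectSum.decompose ℳ x i : M) ∈ K := by
      intro i
      exact hr a _ ha ⟨i, (DirectSum.decompose ℳ x i).2⟩ (haK _) hann
    have hx := DirectSum.sum_support_decompose ℳ x
    rw [← hx]
    exact Submodule.sum_mem K fun i _ => this i
  · intro h
    refine ⟨hKtop, hKgr, fun a x ha hx haxK hann => ?_⟩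
    rcases hKp a x ha hx haxK with hxK | haK
    · exact hxK
    · obtain ⟨m, hm0, hm⟩ := h a ha haK
      exact absurd (hann m hm) hm0
end

section
/- If R is a G-graded ring that is an integral domain, then the zero ideal {0} is the unique graded r-ideal of R. -/
/-!
Setting: `R` is a commutative ring graded by a group `ι` (written additively),
with homogeneous components `𝒜 g`.
-/

variable {ι : Type*} [DecidableEq ι] [AddGroup ι]
variable {R : Type*} [CommRing R]
variable (𝒜 : ι → AddSubgroup R) [GradedRing 𝒜]

/-- A proper graded ideal `P` of `R` is a graded `r`-ideal if whenever homogeneous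
`a, b` satisfy `a * b ∈ P` and `Ann_R(a) = {0}`, then `b ∈ P`. -/
def IsGrRIdeal (P : Ideal R) : Prop :=
  P ≠ ⊤ ∧ IsGradedIdl 𝒜 P ∧
    ∀ a b : R, SetLike.IsHomogeneousElem 𝒜 a → SetLike.IsHomogeneousElem 𝒜 b →
      a * b ∈ P → (∀ r : R, r * a = 0 → r = 0) → b ∈ P

/-- If `R` is a graded integral domain, then the zero ideal is the
unique graded `r`-ideal of `R`. -/
theorem stmt2 [IsDomain R] :
    ∀ P : Ideal R, IsGrRIdeal 𝒜 P ↔ P = ⊥ := by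
  classical
  intro P
  constructor
  · rintro ⟨hne, hgr, hr⟩
    by_contra hP
    obtain ⟨x, hxP, hx0⟩ := Submodule.exists_mem_ne_zero_of_ne_bot hP
    have : ∃ i, (DirectSum.decompose 𝒜 x i : R) ≠ 0 := by
      by_contra h
      push_neg at h
      apply hx0
      rw [← DirectSum.sum_support_decompose 𝒜 x]
      exact Finset.sum_eq_zero fun i _ => h i
    obtain ⟨i, hi⟩ := this
    set a : R := (DirectSum.decompose 𝒜 x i : R) with ha
    have haP : a ∈ P := hgr x hxP i
    have h1 : (1 : R) ∈ P := by
      refine hr a 1 ⟨i, SetLike.coe_mem _⟩ ⟨0, SetLike.one_mem_graded 𝒜⟩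
        (by simpa using haP) ?_
      intro r hra
      rcases mul_eq_zero.mp hra with h | h
      · exact h
      · exact absurd h hi
    exact hne (Ideal.eq_top_of_isUnit_mem P h1 isUnit_one)
  · rintro rfl
    refine ⟨by simp, fun x hx i => by simp_all, fun a b _ _ hab hann => ?_⟩
    simp only [Ideal.mem_bot] at hab ⊢
    exact hann b (by rw [mul_comm]; exact hab)
end

section
/- Let K be a proper graded R-submodule of the graded R-module M. Then K is a graded r-submodule of M if and only if a·M ∩ K = a·K for every a ∈ h(R) with a ∉ Z(M). -/
/-!
Setting: `R` is a commutative ring graded by a group `ι` (written additively),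
`M` is a graded `R`-module.  `𝒜 g` / `ℳ g` are the homogeneous components,
`SetLike.Homogeneous` expresses membership in `h(R)` resp. `h(M)`.
-/

open Pointwise

variable {ι : Type*} [DecidableEq ι] [AddGroup ι]
variable {R : Type*} [CommRing R] {M : Type*} [AddCommGroup M] [Module R M]
variable (𝒜 : ι → AddSubgroup R) (ℳ : ι → AddSubgroup M)
variable [GradedRing 𝒜] [DirectSum.Decomposition ℳ] [SetLike.GradedSMul 𝒜 ℳ]

lemma decompose_homog_smul_aux {ι : Type*} [DecidableEq ι] [AddGroup ι]
    {R : Type*} [CommRing R] {M : Type*} [AddCommGroup M] [Module R M]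
    (𝒜 : ι → AddSubgroup R) (ℳ : ι → AddSubgroup M)
    [GradedRing 𝒜] [DirectSum.Decomposition ℳ] [SetLike.GradedSMul 𝒜 ℳ]
    {g : ι} {a : R} (ha : a ∈ 𝒜 g) (i : ι) (m : M) :
    (DirectSum.decompose ℳ (a • m) (g + i) : M) = a • (DirectSum.decompose ℳ m i : M) := by
  induction m using DirectSum.Decomposition.inductionOn ℳ with
  | zero => simp
  | @homogeneous j m =>
    have hm : (m : M) ∈ ℳ j := m.2
    have ham : a • (m : M) ∈ ℳ (g + j) := SetLike.GradedSMul.smul_mem ha hm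
    by_cases hij : i = j
    · subst hij
      rw [DirectSum.decompose_of_mem_same ℳ ham, DirectSum.decompose_of_mem_same ℳ hm]
    · rw [DirectSum.decompose_of_mem_ne ℳ ham (by simpa using fun h => hij h.symm),
        DirectSum.decompose_of_mem_ne ℳ hm (fun h => hij h.symm), smul_zero]
  | add x y hx hy =>
    rw [smul_add, DirectSum.decompose_add, DirectSum.decompose_add, DirectSum.add_apply,
      DirectSum.add_apply, AddSubgroup.coe_add, AddSubgroup.coe_add, hx, hy, smul_add]

/-- A proper graded submodule `K` of `M` is a graded `r`-submodule iff
`a • M ⊓ K = a • K` for every homogeneous `a ∉ Z(M)` (i.e. with `Ann_M(a) = {0}`). -/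
theorem stmt3 [Nontrivial M] (K : Submodule R M) (hKtop : K ≠ ⊤) (hKgr : IsGradedSub ℳ K) :
    IsGrRSubmodule 𝒜 ℳ K ↔
      ∀ a : R, SetLike.IsHomogeneousElem 𝒜 a → (∀ m : M, a • m = 0 → m = 0) →
        (a • (⊤ : Submodule R M)) ⊓ K = a • K := by
  
  constructor
  · rintro ⟨-, -, hr⟩ a ha hreg
    apply le_antisymm
    · rintro x ⟨hx1, hx2⟩
      obtain ⟨m, -, rfl⟩ := Set.mem_smul_set.mp hx1
      obtain ⟨g, hg⟩ := ha
      have hmK : m ∈ K := by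
        classical
        rw [← DirectSum.sum_support_decompose ℳ m]
        refine Submodule.sum_mem K fun i _ => ?_
        refine hr a _ ⟨g, hg⟩ ⟨i, (DirectSum.decompose ℳ m i).2⟩ ?_ hreg
        rw [← decompose_homog_smul_aux 𝒜 ℳ hg i m]
        exact hKgr _ hx2 (g + i)
      exact Set.smul_mem_smul_set hmK
    · rintro x hx
      obtain ⟨k, hk, rfl⟩ := Set.mem_smul_set.mp hx
      exact ⟨Set.smul_mem_smul_set trivial, K.smul_mem a hk⟩
  · intro h
    refine ⟨hKtop, hKgr, fun a x ha _ haxK hreg => ?_⟩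
    have : a • x ∈ (a • (⊤ : Submodule R M)) ⊓ K := ⟨Set.smul_mem_smul_set trivial, haxK⟩
    rw [h a ha hreg] at this
    obtain ⟨k, hk, hke⟩ := Set.mem_smul_set.mp this
    have : x - k = 0 := hreg _ (by rw [smul_sub, hke, sub_self])
    rwa [sub_eq_zero.mp this]
end

section
/- Every graded pure R-submodule of the graded R-module M is a graded r-submodule of M. -/
/-!
Setting: `R` is a commutative ring graded by a group `ι` (written additively),
`M` is a graded `R`-module.  `𝒜 g` / `ℳ g` are the homogeneous components,
`SetLike.Homogeneous` expresses membership in `h(R)` resp. `h(M)`.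
-/

open Pointwise

variable {ι : Type*} [DecidableEq ι] [AddGroup ι]
variable {R : Type*} [CommRing R] {M : Type*} [AddCommGroup M] [Module R M]
variable (𝒜 : ι → AddSubgroup R) (ℳ : ι → AddSubgroup M)
variable [GradedRing 𝒜] [DirectSum.Decomposition ℳ] [SetLike.GradedSMul 𝒜 ℳ]

/-- Every graded pure submodule of `M` (a proper graded submodule `K`
with `a • M ⊓ K = a • K` for all `a ∈ h(R)`) is a graded `r`-submodule of `M`. -/
theorem stmt4 [Nontrivial M] (K : Submodule R M) (hKtop : K ≠ ⊤) (hKgr : IsGradedSub ℳ K)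
    (hpure : ∀ a : R, SetLike.IsHomogeneousElem 𝒜 a →
      (a • (⊤ : Submodule R M)) ⊓ K = a • K) :
    IsGrRSubmodule 𝒜 ℳ K := by
  refine ⟨hKtop, hKgr, fun a x ha hx haxK hinj => ?_⟩
  have h1 : a • x ∈ (a • (⊤ : Submodule R M)) ⊓ K := by
    refine ⟨?_, haxK⟩
    exact Set.smul_mem_smul_set (Submodule.mem_top)
  rw [hpure a ha] at h1
  obtain ⟨k, hk, hak⟩ := Set.mem_smul_set.mp h1
  have : a • (x - k) = 0 := by
    rw [smul_sub, hak, sub_self]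
  have := hinj _ this
  have hxk : x = k := sub_eq_zero.mp this
  rw [hxk]; exact hk
end

section
/- Every proper graded R-submodule of the graded R-module M is a graded r-submodule of M if and only if a·K = K for every graded R-submodule K of M and every a ∈ h(R) with a ∉ Z(M). -/
/-!
Setting: `R` is a commutative ring graded by a group `ι` (written additively),
`M` is a graded `R`-module.  `𝒜 g` / `ℳ g` are the homogeneous components,
`SetLike.Homogeneous` expresses membership in `h(R)` resp. `h(M)`.
-/

open Pointwise

variable {ι : Type*} [DecidableEq ι] [AddGroup ι]
variable {R : Type*} [CommRing R] {M : Type*} [AddCommGroup M] [Module R M]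
variable (𝒜 : ι → AddSubgroup R) (ℳ : ι → AddSubgroup M)
variable [GradedRing 𝒜] [DirectSum.Decomposition ℳ] [SetLike.GradedSMul 𝒜 ℳ]

private lemma mem_pointwise_smul_iff {a : R} {S : Submodule R M} {x : M} :
    x ∈ a • S ↔ ∃ s ∈ S, a • s = x := by
  rw [← SetLike.mem_coe, Submodule.coe_pointwise_smul]
  exact Set.mem_smul_set

omit [GradedRing 𝒜] in
private lemma decompose_smul_homog {g : ι} {a : R} (ha : a ∈ 𝒜 g) (m : M) (i : ι) :
    (DirectSum.decompose ℳ (a • m) (g + i) : M) = a • (DirectSum.decompose ℳ m i : M) := by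
  induction m using DirectSum.Decomposition.inductionOn ℳ with
  | zero => simp
  | @homogeneous j x =>
    have hx : (x : M) ∈ ℳ j := x.2
    have hax : a • (x : M) ∈ ℳ (g + j) := SetLike.GradedSMul.smul_mem ha hx
    by_cases h : j = i
    · subst h
      rw [DirectSum.decompose_of_mem_same ℳ hx, DirectSum.decompose_of_mem_same ℳ hax]
    · rw [DirectSum.decompose_of_mem_ne ℳ hx h,
        DirectSum.decompose_of_mem_ne ℳ hax (fun hc => h (add_left_cancel hc)), smul_zero]
  | add m m' hm hm' =>
    rw [smul_add, DirectSum.decompose_add, DirectSum.decompose_add]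
    simp only [DirectSum.add_apply, AddSubgroup.coe_add]
    rw [hm, hm', smul_add]

omit [GradedRing 𝒜] in
/-- Under the r-submodule hypothesis, multiplication by a regular homogeneous element
is surjective on `M`. -/
private lemma smul_top_eq (H : ∀ K : Submodule R M, K ≠ ⊤ → IsGradedSub ℳ K →
      IsGrRSubmodule 𝒜 ℳ K)
    {g : ι} {a : R} (ha : a ∈ 𝒜 g) (hreg : ∀ m : M, a • m = 0 → m = 0) :
    a • (⊤ : Submodule R M) = ⊤ := by
  classical
  by_contra hne
  have hgr : IsGradedSub ℳ (a • (⊤ : Submodule R M)) := by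
    intro x hx i
    obtain ⟨m, -, rfl⟩ := mem_pointwise_smul_iff.mp hx
    have : (DirectSum.decompose ℳ (a • m) i : M)
        = a • (DirectSum.decompose ℳ m (-g + i) : M) := by
      have := decompose_smul_homog 𝒜 ℳ ha m (-g + i)
      rwa [add_neg_cancel_left] at this
    rw [this]
    exact Submodule.smul_mem_pointwise_smul _ _ _ trivial
  obtain ⟨-, -, hr⟩ := H _ hne hgr
  apply hne
  rw [eq_top_iff]
  intro m _
  rw [← DirectSum.sum_support_decompose ℳ m]
  refine Submodule.sum_mem _ fun i _ => ?_
  exact hr a _ ⟨g, ha⟩ ⟨i, SetLike.coe_mem _⟩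
    (Submodule.smul_mem_pointwise_smul _ _ _ trivial) hreg

set_option linter.unusedSectionVars false in
/-- Every proper graded submodule of `M` is a graded `r`-submodule iff
`a • K = K` for every graded submodule `K` of `M` and every homogeneous `a ∉ Z(M)`. -/
theorem stmt5 [Nontrivial M] :
    (∀ K : Submodule R M, K ≠ ⊤ → IsGradedSub ℳ K → IsGrRSubmodule 𝒜 ℳ K) ↔
      ∀ K : Submodule R M, IsGradedSub ℳ K →
        ∀ a : R, SetLike.IsHomogeneousElem 𝒜 a → (∀ m : M, a • m = 0 → m = 0) →
          a • K = K := by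
  classical
  constructor
  · intro H K hK a ha hreg
    obtain ⟨g, hag⟩ := ha
    by_cases htop : K = ⊤
    · subst htop
      exact smul_top_eq 𝒜 ℳ H hag hreg
    · apply le_antisymm
      · intro x hx
        obtain ⟨s, hs, rfl⟩ := mem_pointwise_smul_iff.mp hx
        exact K.smul_mem a hs
      · intro x hx
        rw [← DirectSum.sum_support_decompose ℳ x]
        refine Submodule.sum_mem _ fun i _ => ?_
        -- the i-th component is homogeneous and lies in K
        have hxi : (DirectSum.decompose ℳ x i : M) ∈ K := hK x hx i
        -- surjectivity: find m with a • m = component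
        have hsurj : a • (⊤ : Submodule R M) = ⊤ := smul_top_eq 𝒜 ℳ H hag hreg
        have : (DirectSum.decompose ℳ x i : M) ∈ a • (⊤ : Submodule R M) := by
          rw [hsurj]; trivial
        obtain ⟨m, -, hm⟩ := mem_pointwise_smul_iff.mp this
        set m' : M := (DirectSum.decompose ℳ m (-g + i) : M) with hm'def
        have hcomp : (DirectSum.decompose ℳ x i : M) = a • m' := by
          have h1 := decompose_smul_homog 𝒜 ℳ hag m (-g + i)
          rw [add_neg_cancel_left] at h1
          have h2 : (DirectSum.decompose ℳ (a • m) i : M) = a • m := by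
            rw [hm]; exact DirectSum.decompose_of_mem_same ℳ (SetLike.coe_mem _)
          rw [← hm, ← h2, h1]
        have hm'K : m' ∈ K := by
          obtain ⟨-, -, hr⟩ := H K htop hK
          exact hr a m' ⟨g, hag⟩ ⟨-g + i, SetLike.coe_mem _⟩ (hcomp ▸ hxi) hreg
        rw [hcomp]
        exact Submodule.smul_mem_pointwise_smul _ _ _ hm'K
  · intro H K hne hK
    refine ⟨hne, hK, fun a x ha hx haxK hreg => ?_⟩
    have : a • x ∈ a • K := by rw [H K hK a ha hreg]; exact haxK
    obtain ⟨k, hk, hak⟩ := mem_pointwise_smul_iff.mp this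
    have hxk : x - k = 0 := hreg _ (by rw [smul_sub, hak, sub_self])
    rwa [sub_eq_zero.mp hxk]
end

section
/- Let K be a proper graded R-submodule of the graded R-module M. Then K is a graded r-submodule of M if and only if (K :_M a) = K for every a ∈ h(R) with a ∉ Z(M), where (K :_M a) = {m ∈ M : a·m ∈ K}. -/
/-!
Setting: `R` is a commutative ring graded by a group `ι` (written additively),
`M` is a graded `R`-module.  `𝒜 g` / `ℳ g` are the homogeneous components,
`SetLike.Homogeneous` expresses membership in `h(R)` resp. `h(M)`.
-/

open Pointwise

variable {ι : Type*} [DecidableEq ι] [AddGroup ι]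
variable {R : Type*} [CommRing R] {M : Type*} [AddCommGroup M] [Module R M]
variable (𝒜 : ι → AddSubgroup R) (ℳ : ι → AddSubgroup M)
variable [GradedRing 𝒜] [DirectSum.Decomposition ℳ] [SetLike.GradedSMul 𝒜 ℳ]

theorem coe_decompose_smul_add {g i : ι} {a : R} (ha : a ∈ 𝒜 g) (m : M) :
    (DirectSum.decompose ℳ (a • m) (g + i) : M) = a • (DirectSum.decompose ℳ m i : M) := by
  classical
  induction m using DirectSum.Decomposition.inductionOn ℳ with
  | zero => simp
  | @homogeneous j x =>
    obtain ⟨x, hx⟩ := x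
    have hax : a • x ∈ ℳ (g + j) := SetLike.GradedSMul.smul_mem ha hx
    by_cases hji : j = i
    · subst hji
      rw [DirectSum.decompose_of_mem_same ℳ hax, DirectSum.decompose_of_mem_same ℳ hx]
    · rw [DirectSum.decompose_of_mem_ne ℳ hax (by simpa using hji),
        DirectSum.decompose_of_mem_ne ℳ hx hji, smul_zero]
  | add x y hx hy =>
    rw [smul_add, DirectSum.decompose_add, DirectSum.decompose_add]
    simp only [DirectSum.add_apply, AddSubgroup.coe_add, hx, hy, smul_add]

/-- A proper graded submodule `K` of `M` is a graded `r`-submodule iff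
`(K :_M a) = K` for every homogeneous `a ∉ Z(M)`. -/
theorem stmt6 [Nontrivial M] (K : Submodule R M) (hKtop : K ≠ ⊤) (hKgr : IsGradedSub ℳ K) :
    IsGrRSubmodule 𝒜 ℳ K ↔
      ∀ a : R, SetLike.IsHomogeneousElem 𝒜 a → (∀ m : M, a • m = 0 → m = 0) →
        {m : M | a • m ∈ K} = (K : Set M) := by
  classical
  constructor
  · rintro ⟨-, -, hK⟩ a ⟨g, ha⟩ hreg
    ext m
    simp only [Set.mem_setOf_eq, SetLike.mem_coe]
    constructor
    · intro ham
      rw [← DirectSum.sum_support_decompose ℳ m]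
      refine Submodule.sum_mem K fun i _ => ?_
      refine hK a _ ⟨g, ha⟩ ⟨i, (DirectSum.decompose ℳ m i).2⟩ ?_ hreg
      rw [← coe_decompose_smul_add 𝒜 ℳ ha m]
      exact hKgr _ ham _
    · intro hm
      exact Submodule.smul_mem K a hm
  · intro h
    refine ⟨hKtop, hKgr, fun a x ha hx hax hreg => ?_⟩
    have := h a ha hreg
    rw [← SetLike.mem_coe, ← this]
    exact hax
end

section
/- Let a ∈ h(R) with a ∉ Ann_R(M) (i.e., a·M ≠ {0}). Then Ann_M(a) = {m ∈ M : a·m = 0} is a graded r-submodule of M. -/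
/-!
Setting: `R` is a commutative ring graded by a group `ι` (written additively),
`M` is a graded `R`-module.  `𝒜 g` / `ℳ g` are the homogeneous components,
`SetLike.Homogeneous` expresses membership in `h(R)` resp. `h(M)`.
-/

open Pointwise

variable {ι : Type*} [DecidableEq ι] [AddGroup ι]
variable {R : Type*} [CommRing R] {M : Type*} [AddCommGroup M] [Module R M]
variable (𝒜 : ι → AddSubgroup R) (ℳ : ι → AddSubgroup M)
variable [GradedRing 𝒜] [DirectSum.Decomposition ℳ] [SetLike.GradedSMul 𝒜 ℳ]

/-- The annihilator `Ann_M(a) = {m ∈ M : a • m = 0}` as a submodule of `M`. -/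
def annMod (a : R) : Submodule R M where
  carrier := {m : M | a • m = 0}
  add_mem' := by
    intro x y hx hy
    simp only [Set.mem_setOf_eq, smul_add] at *
    rw [hx, hy, add_zero]
  zero_mem' := by simp
  smul_mem' := by
    intro c x hx
    simp only [Set.mem_setOf_eq] at *
    rw [smul_comm, hx, smul_zero]

lemma coe_decompose_smul_add_of_mem {g : ι} {a : R} (ha : a ∈ 𝒜 g) (x : M) (i : ι) :
    (DirectSum.decompose ℳ (a • x) (g + i) : M) = a • (DirectSum.decompose ℳ x i : M) := by
  induction x using DirectSum.Decomposition.inductionOn ℳ with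
  | zero => simp
  | @homogeneous j x =>
    obtain ⟨x, hx⟩ := x
    have hax : a • x ∈ ℳ (g + j) := SetLike.GradedSMul.smul_mem ha hx
    rcases eq_or_ne i j with rfl | hij
    · rw [DirectSum.decompose_of_mem_same ℳ hax, DirectSum.decompose_of_mem_same ℳ hx]
    · rw [DirectSum.decompose_of_mem_ne ℳ hax (fun h => hij (add_left_cancel h).symm),
        DirectSum.decompose_of_mem_ne ℳ hx (Ne.symm hij), smul_zero]
  | add x y hx hy =>
    rw [smul_add, DirectSum.decompose_add, DirectSum.decompose_add, DirectSum.add_apply, DirectSum.add_apply,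
      AddSubgroup.coe_add, AddSubgroup.coe_add, hx, hy, smul_add]

/-- If `a ∈ h(R)` and `a ∉ Ann_R(M)`, then `Ann_M(a)` is a graded
`r`-submodule of `M`. -/
theorem stmt7 [Nontrivial M] (a : R) (ha : SetLike.IsHomogeneousElem 𝒜 a)
    (haM : ¬ ∀ m : M, a • m = 0) :
    IsGrRSubmodule 𝒜 ℳ (annMod (M := M) a) := by
  obtain ⟨g, hg⟩ := ha
  refine ⟨?_, ?_, ?_⟩
  · intro h
    apply haM
    intro m
    have : m ∈ annMod (M := M) a := h ▸ Submodule.mem_top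
    exact this
  · intro x hx i
    have hx0 : a • x = 0 := hx
    show a • (DirectSum.decompose ℳ x i : M) = 0
    rw [← coe_decompose_smul_add_of_mem 𝒜 ℳ hg, hx0]
    simp
  · intro b x _ _ hbx hb
    have : b • (a • x) = 0 := by
      rw [smul_comm]; exact hbx
    exact hb _ this
end

section
/- Suppose the zero submodule {0} is the only graded r-submodule of the graded R-module M. Then {0} is a graded prime R-submodule of M. -/
/-!
Setting: `R` is a commutative ring graded by a group `ι` (written additively),
`M` is a graded `R`-module.  `𝒜 g` / `ℳ g` are the homogeneous components,
`SetLike.Homogeneous` expresses membership in `h(R)` resp. `h(M)`.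
-/

open Pointwise

variable {ι : Type*} [DecidableEq ι] [AddGroup ι]
variable {R : Type*} [CommRing R] {M : Type*} [AddCommGroup M] [Module R M]
variable (𝒜 : ι → AddSubgroup R) (ℳ : ι → AddSubgroup M)
variable [GradedRing 𝒜] [DirectSum.Decomposition ℳ] [SetLike.GradedSMul 𝒜 ℳ]

lemma smul_decompose_homog (a : R) (g : ι) (ha : a ∈ 𝒜 g) (j : ι) (m : M) :
    a • (DirectSum.decompose ℳ m j : M) = (DirectSum.decompose ℳ (a • m) (g + j) : M) := by
  induction m using DirectSum.Decomposition.inductionOn ℳ with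
  | zero => simp
  | @homogeneous i x =>
    have hax : a • (x : M) ∈ ℳ (g + i) := SetLike.GradedSMul.smul_mem ha x.2
    by_cases hij : i = j
    · subst hij
      rw [DirectSum.decompose_of_mem_same ℳ x.2, DirectSum.decompose_of_mem_same ℳ hax]
    · rw [DirectSum.decompose_of_mem_ne ℳ x.2 hij,
        DirectSum.decompose_of_mem_ne ℳ hax (by
          intro hgij
          exact hij (by simpa using add_left_cancel hgij)), smul_zero]
  | add m m' hm hm' =>
    rw [smul_add, DirectSum.decompose_add, DirectSum.decompose_add, DirectSum.add_apply,
      DirectSum.add_apply, AddSubgroup.coe_add, AddSubgroup.coe_add, smul_add, hm, hm']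

/-- If the zero submodule is the only graded `r`-submodule of `M`,
then `{0}` is a graded prime submodule of `M`. -/
theorem stmt8 [Nontrivial M]
    (h : ∀ K : Submodule R M, IsGrRSubmodule 𝒜 ℳ K ↔ K = ⊥) :
    IsGrPrimeSubmodule 𝒜 ℳ (⊥ : Submodule R M) := by
  obtain ⟨hne, hgr, -⟩ := (h ⊥).mpr rfl
  refine ⟨hne, hgr, ?_⟩
  intro a x ha hx hax
  by_cases hann : ∀ m : M, a • m = 0
  · exact Or.inr fun m => by simpa using hann m
  · left
    push_neg at hann
    obtain ⟨m₀, hm₀⟩ := hann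
    set K : Submodule R M :=
      { carrier := {m | a • m = 0}
        zero_mem' := smul_zero a
        add_mem' := by
          intro p q hp hq
          simp only [Set.mem_setOf_eq, smul_add] at *
          rw [hp, hq, add_zero]
        smul_mem' := by
          intro r p hp
          simp only [Set.mem_setOf_eq] at *
          rw [smul_comm, hp, smul_zero] } with hKdef
    have hKmem : ∀ m : M, m ∈ K ↔ a • m = 0 := fun m => Iff.rfl
    have hK : IsGrRSubmodule 𝒜 ℳ K := by
      refine ⟨?_, ?_, ?_⟩
      · intro htop
        exact hm₀ ((hKmem m₀).mp (htop ▸ Submodule.mem_top))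
      · intro m hm j
        obtain ⟨g, hg⟩ := ha
        rw [hKmem] at hm ⊢
        rw [smul_decompose_homog 𝒜 ℳ a g hg j m, hm]
        simp
      · intro b y hb hy hby hbreg
        rw [hKmem] at hby ⊢
        refine hbreg (a • y) ?_
        rw [smul_comm, hby]
    have hKbot := (h K).mp hK
    have : x ∈ K := (hKmem x).mpr (by simpa using hax)
    rw [hKbot] at this
    exact this
end

section
/- Let K be a proper graded R-submodule of the graded R-module M. Then K is a graded r-submodule of M if and only if the following holds: for every graded ideal P of R and every graded R-submodule N of M such that P·N ⊆ K and P contains some element of h(R) not in Z(M), one has N ⊆ K. -/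
/-!
Setting: `R` is a commutative ring graded by a group `ι` (written additively),
`M` is a graded `R`-module.  `𝒜 g` / `ℳ g` are the homogeneous components,
`SetLike.Homogeneous` expresses membership in `h(R)` resp. `h(M)`.
-/

open Pointwise

variable {ι : Type*} [DecidableEq ι] [AddGroup ι]
variable {R : Type*} [CommRing R] {M : Type*} [AddCommGroup M] [Module R M]
variable (𝒜 : ι → AddSubgroup R) (ℳ : ι → AddSubgroup M)
variable [GradedRing 𝒜] [DirectSum.Decomposition ℳ] [SetLike.GradedSMul 𝒜 ℳ]

/-- A proper graded submodule `K` of `M` is a graded `r`-submodule iff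
for every graded ideal `P` of `R` and graded submodule `N` of `M` with `P • N ⊆ K`
and `P ∩ (h(R) - Z(M)) ≠ ∅`, one has `N ⊆ K`. -/
theorem stmt9 [Nontrivial M] (K : Submodule R M) (hKtop : K ≠ ⊤) (hKgr : IsGradedSub ℳ K) :
    IsGrRSubmodule 𝒜 ℳ K ↔
      ∀ (P : Ideal R) (N : Submodule R M), IsGradedIdl 𝒜 P → IsGradedSub ℳ N →
        P • N ≤ K →
        (∃ a ∈ P, SetLike.IsHomogeneousElem 𝒜 a ∧ ∀ m : M, a • m = 0 → m = 0) →
        N ≤ K := by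

  classical
  constructor
  · rintro ⟨-, -, hK⟩ P N hP hN hPN ⟨a, haP, haH, haReg⟩ x hx
    have hcomp : ∀ i, ((DirectSum.decompose ℳ x i : ℳ i) : M) ∈ K := fun i =>
      hK a _ haH ⟨i, (DirectSum.decompose ℳ x i).2⟩
        (hPN (Submodule.smul_mem_smul haP (hN x hx i))) haReg
    rw [← DirectSum.sum_support_decompose ℳ x]
    exact Submodule.sum_mem _ fun i _ => hcomp i
  · intro h
    refine ⟨hKtop, hKgr, fun a x haH hxH hax hreg => ?_⟩
    obtain ⟨j, hxj⟩ := hxH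
    have key : ∀ (c : R) (i : ι),
        ((DirectSum.decompose ℳ (c • x) i : ℳ i) : M) ∈ Submodule.span R {x} := by
      intro c i
      have hc : c • x = ∑ g ∈ (DirectSum.decompose 𝒜 c).support,
          ((DirectSum.decompose 𝒜 c g : 𝒜 g) : R) • x := by
        conv_lhs => rw [← DirectSum.sum_support_decompose 𝒜 c]
        rw [Finset.sum_smul]
      rw [hc, DirectSum.decompose_sum, DFinsupp.finset_sum_apply,
        AddSubmonoidClass.coe_finset_sum]
      refine Submodule.sum_mem _ fun g _ => ?_
      have hmem : ((DirectSum.decompose 𝒜 c g : 𝒜 g) : R) • x ∈ ℳ (g + j) := by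
        have := SetLike.GradedSMul.smul_mem (SetLike.coe_mem (DirectSum.decompose 𝒜 c g)) hxj
        simpa using this
      by_cases hig : g + j = i
      · rw [← hig, DirectSum.decompose_of_mem_same ℳ hmem]
        exact Submodule.smul_mem _ _ (Submodule.mem_span_singleton_self x)
      · rw [DirectSum.decompose_of_mem_ne ℳ hmem hig]
        exact Submodule.zero_mem _
    set N := K ⊔ Submodule.span R {x} with hNdef
    have hNgr : IsGradedSub ℳ N := by
      intro y hy i
      rw [hNdef, Submodule.mem_sup] at hy
      obtain ⟨k, hk, z, hz, rfl⟩ := hy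
      obtain ⟨c, rfl⟩ := Submodule.mem_span_singleton.mp hz
      rw [DirectSum.decompose_add]
      push_cast
      exact N.add_mem (Submodule.mem_sup_left (hKgr k hk i)) (Submodule.mem_sup_right (key c i))
    have hPhom : Ideal.IsHomogeneous 𝒜 (Ideal.span {a}) :=
      Ideal.homogeneous_span 𝒜 {a} (by rintro _ rfl; exact haH)
    have hPgr : IsGradedIdl 𝒜 (Ideal.span {a}) := fun y hy i => hPhom i hy
    have hPN : Ideal.span {a} • N ≤ K := by
      rw [hNdef, Submodule.smul_sup]
      refine sup_le (Submodule.smul_le.2 fun r _ m hm => K.smul_mem r hm)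
        (Submodule.smul_le.2 fun r hr m hm => ?_)
      obtain ⟨c, rfl⟩ := Ideal.mem_span_singleton'.mp hr
      obtain ⟨d, rfl⟩ := Submodule.mem_span_singleton.mp hm
      have heq : (c * a) • d • x = (c * d) • (a • x) := by
        rw [smul_smul, smul_smul]; ring_nf
      rw [heq]
      exact K.smul_mem _ hax
    exact h _ N hPgr hNgr hPN ⟨a, Ideal.subset_span rfl, haH, hreg⟩
      (Submodule.mem_sup_right (Submodule.mem_span_singleton_self x))
end

section
/- Let K and N be graded r-submodules of the graded R-module M and let P be a graded ideal of R containing some element of h(R) not in Z(M). If P·K = P·N, then K = N. -/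
/-!
Setting: `R` is a commutative ring graded by a group `ι` (written additively),
`M` is a graded `R`-module.  `𝒜 g` / `ℳ g` are the homogeneous components,
`SetLike.Homogeneous` expresses membership in `h(R)` resp. `h(M)`.
-/

open Pointwise

variable {ι : Type*} [DecidableEq ι] [AddGroup ι]
variable {R : Type*} [CommRing R] {M : Type*} [AddCommGroup M] [Module R M]
variable (𝒜 : ι → AddSubgroup R) (ℳ : ι → AddSubgroup M)
variable [GradedRing 𝒜] [DirectSum.Decomposition ℳ] [SetLike.GradedSMul 𝒜 ℳ]

theorem stmt10_aux [Nontrivial M] (K N : Submodule R M)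
    (hK : IsGrRSubmodule 𝒜 ℳ K) (hN : IsGrRSubmodule 𝒜 ℳ N)
    (P : Ideal R)
    (hPa : ∃ a ∈ P, SetLike.IsHomogeneousElem 𝒜 a ∧ ∀ m : M, a • m = 0 → m = 0)
    (hPKN : P • K ≤ P • N) : K ≤ N := by
  intro x hx
  obtain ⟨a, haP, haH, hareg⟩ := hPa
  have key : ∀ i, (DirectSum.decompose ℳ x i : M) ∈ N := by
    intro i
    have hxi := hK.2.1 x hx i
    have h1 : a • ((DirectSum.decompose ℳ x i : M)) ∈ P • N :=
      hPKN (Submodule.smul_mem_smul haP hxi)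
    have h2 : a • ((DirectSum.decompose ℳ x i : M)) ∈ N :=
      Submodule.smul_le_right h1
    exact hN.2.2 a _ haH ⟨i, (DirectSum.decompose ℳ x i).2⟩ h2 hareg
  classical
  rw [← DirectSum.sum_support_decompose ℳ x]
  exact Submodule.sum_mem _ fun i _ => key i

/-- If `K` and `N` are graded `r`-submodules of `M` and `P` is a graded
ideal of `R` with `P ∩ (h(R) - Z(M)) ≠ ∅` and `P • K = P • N`, then `K = N`. -/
theorem stmt10 [Nontrivial M] (K N : Submodule R M)
    (hK : IsGrRSubmodule 𝒜 ℳ K) (hN : IsGrRSubmodule 𝒜 ℳ N)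
    (P : Ideal R) (hP : IsGradedIdl 𝒜 P)
    (hPa : ∃ a ∈ P, SetLike.IsHomogeneousElem 𝒜 a ∧ ∀ m : M, a • m = 0 → m = 0)
    (hPKN : P • K = P • N) : K = N :=
  le_antisymm (stmt10_aux 𝒜 ℳ K N hK hN P hPa hPKN.le)
    (stmt10_aux 𝒜 ℳ N K hN hK P hPa hPKN.ge)
end

section
/- Let K be a proper graded R-submodule of the graded R-module M such that h(R) ∩ (K :_R M) ⊆ Z(M). If K is not a graded r-submodule of M, then there exist a graded ideal P of R and a graded R-submodule N of M such that P contains some element of h(R) not in Z(M), K ⊊ N, (K :_R M) ⊊ P, and P·N ⊆ K. -/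
/-!
Setting: `R` is a commutative ring graded by a group `ι` (written additively),
`M` is a graded `R`-module.  `𝒜 g` / `ℳ g` are the homogeneous components,
`SetLike.Homogeneous` expresses membership in `h(R)` resp. `h(M)`.
-/

open Pointwise

variable {ι : Type*} [DecidableEq ι] [AddGroup ι]
variable {R : Type*} [CommRing R] {M : Type*} [AddCommGroup M] [Module R M]
variable (𝒜 : ι → AddSubgroup R) (ℳ : ι → AddSubgroup M)
variable [GradedRing 𝒜] [DirectSum.Decomposition ℳ] [SetLike.GradedSMul 𝒜 ℳ]

open DirectSum in
lemma decompose_smul_homog_s11 (r : R) {x : M} {g : ι} (hx : x ∈ ℳ g) (i : ι) :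
    (DirectSum.decompose ℳ (r • x) i : M) = (DirectSum.decompose 𝒜 r (i - g) : R) • x := by
  classical
  nth_rewrite 1 [← DirectSum.sum_support_decompose 𝒜 r]
  rw [Finset.sum_smul, DirectSum.decompose_sum, DFinsupp.finset_sum_apply,
    AddSubmonoidClass.coe_finset_sum]
  have hterm : ∀ j, (DirectSum.decompose ℳ ((DirectSum.decompose 𝒜 r j : R) • x) i : M)
      = if j = i - g then (DirectSum.decompose 𝒜 r j : R) • x else 0 := by
    intro j
    have hmem : (DirectSum.decompose 𝒜 r j : R) • x ∈ ℳ (j +ᵥ g) :=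
      SetLike.GradedSMul.smul_mem (SetLike.coe_mem _) hx
    rw [vadd_eq_add] at hmem
    by_cases h : j = i - g
    · subst h
      rw [if_pos rfl]
      rw [sub_add_cancel] at hmem
      exact DirectSum.decompose_of_mem_same ℳ hmem
    · rw [if_neg h]
      exact DirectSum.decompose_of_mem_ne ℳ hmem (fun hc => h (eq_sub_iff_add_eq.mpr hc))
  rw [Finset.sum_congr rfl (fun j _ => hterm j), Finset.sum_ite_eq']
  by_cases hs : i - g ∈ DFinsupp.support (DirectSum.decompose 𝒜 r)
  · rw [if_pos hs]
  · rw [if_neg hs, DFinsupp.notMem_support_iff.mp hs, ZeroMemClass.coe_zero, zero_smul]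


/-- If `K` is a proper graded submodule of `M` with
`h(R) ∩ (K :_R M) ⊆ Z(M)` which is not a graded `r`-submodule, then there are a graded
ideal `P` of `R` and a graded submodule `N` of `M` with `P ∩ (h(R) - Z(M)) ≠ ∅`,
`K ⊊ N`, `(K :_R M) ⊊ P` and `P • N ⊆ K`. -/
theorem stmt11 [Nontrivial M] (K : Submodule R M) (hKtop : K ≠ ⊤) (hKgr : IsGradedSub ℳ K)
    (hcol : ∀ a : R, SetLike.IsHomogeneousElem 𝒜 a → a ∈ K.colon ⊤ →
      ∃ m : M, m ≠ 0 ∧ a • m = 0)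
    (hnot : ¬ IsGrRSubmodule 𝒜 ℳ K) :
    ∃ (P : Ideal R) (N : Submodule R M), IsGradedIdl 𝒜 P ∧ IsGradedSub ℳ N ∧
      (∃ a ∈ P, SetLike.IsHomogeneousElem 𝒜 a ∧ ∀ m : M, a • m = 0 → m = 0) ∧
      K < N ∧ K.colon ⊤ < P ∧ P • N ≤ K := by
  classical
  have h1 : ∃ a x, SetLike.IsHomogeneousElem 𝒜 a ∧ SetLike.IsHomogeneousElem ℳ x ∧
      a • x ∈ K ∧ (∀ m : M, a • m = 0 → m = 0) ∧ x ∉ K := by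
    by_contra hc
    push_neg at hc
    exact hnot ⟨hKtop, hKgr, fun a x ha hx haxK hreg => hc a x ha hx haxK hreg⟩
  obtain ⟨a, x, ha, hx, haxK, hreg, hxK⟩ := h1
  obtain ⟨g, hxg⟩ := hx
  set N : Submodule R M := K ⊔ Submodule.span R {x} with hN
  set P : Ideal R := K.colon N with hP
  have hxN : x ∈ N := Submodule.mem_sup_right (Submodule.mem_span_singleton_self x)
  have hNgr : IsGradedSub ℳ N := by
    intro y hy i
    rw [hN, Submodule.mem_sup] at hy
    obtain ⟨k, hk, c, hc, rfl⟩ := hy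
    rw [Submodule.mem_span_singleton] at hc
    obtain ⟨r, rfl⟩ := hc
    have hco : (DirectSum.decompose ℳ (k + r • x) i : M)
        = (DirectSum.decompose ℳ k i : M) + (DirectSum.decompose ℳ (r • x) i : M) := by
      rw [DirectSum.decompose_add, DirectSum.add_apply]; rfl
    rw [hco]
    refine Submodule.add_mem _ (Submodule.mem_sup_left (hKgr k hk i))
      (Submodule.mem_sup_right ?_)
    rw [decompose_smul_homog_s11 𝒜 ℳ r hxg]
    exact Submodule.mem_span_singleton.mpr ⟨_, rfl⟩
  have haP : a ∈ P := by
    rw [hP, Submodule.mem_colon]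
    intro n hn
    rw [hN, SetLike.mem_coe, Submodule.mem_sup] at hn
    obtain ⟨k, hk, c, hc, rfl⟩ := hn
    rw [Submodule.mem_span_singleton] at hc
    obtain ⟨r, rfl⟩ := hc
    have : a • (k + r • x) = a • k + r • (a • x) := by
      rw [smul_add, smul_comm a r x]
    rw [this]
    exact Submodule.add_mem _ (Submodule.smul_mem _ _ hk) (Submodule.smul_mem _ _ haxK)
  refine ⟨P, N, ?_, hNgr, ⟨a, haP, ha, hreg⟩, ?_, ?_, ?_⟩
  · -- P is a graded ideal
    intro r hr i
    rw [hP, Submodule.mem_colon] at hr ⊢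
    intro n hn
    have key : ∀ j (m : M), m ∈ ℳ j → m ∈ N → (DirectSum.decompose 𝒜 r i : R) • m ∈ K := by
      intro j m hmj hmN
      have h3 := hKgr _ (hr m hmN) (i + j)
      rw [decompose_smul_homog_s11 𝒜 ℳ r hmj, add_sub_cancel_right] at h3
      exact h3
    have hn' : n = ∑ j ∈ DFinsupp.support (DirectSum.decompose ℳ n),
        (DirectSum.decompose ℳ n j : M) := (DirectSum.sum_support_decompose ℳ n).symm
    rw [hn', Finset.smul_sum]
    exact Submodule.sum_mem K fun j _ => key j _ (SetLike.coe_mem _) (hNgr n hn j)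
  · -- K < N
    refine lt_of_le_of_ne le_sup_left (fun h => hxK ?_)
    rw [h]; exact hxN
  · -- K.colon ⊤ < P
    have hle : K.colon ⊤ ≤ P := by
      intro r hr
      rw [hP, Submodule.mem_colon]
      exact fun n _ => Submodule.mem_colon.mp hr n trivial
    refine lt_of_le_of_ne hle (fun h => ?_)
    have haK : a ∈ K.colon ⊤ := by rw [h]; exact haP
    obtain ⟨m, hm0, hm⟩ := hcol a ha haK
    exact hm0 (hreg m hm)
  · -- P • N ≤ K
    exact Submodule.smul_le.mpr fun r hr n hn => Submodule.mem_colon.mp hr n hn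
end

section
/- Let K be a graded prime R-submodule of the graded R-module M. Then K is a graded special r-submodule of M if and only if h(M) ∩ K ⊆ T(M). -/
/-!
Setting: `R` is a commutative ring graded by a group `ι` (written additively),
`M` is a graded `R`-module.  `𝒜 g` / `ℳ g` are the homogeneous components,
`SetLike.Homogeneous` expresses membership in `h(R)` resp. `h(M)`.
-/

open Pointwise

variable {ι : Type*} [DecidableEq ι] [AddGroup ι]
variable {R : Type*} [CommRing R] {M : Type*} [AddCommGroup M] [Module R M]
variable (𝒜 : ι → AddSubgroup R) (ℳ : ι → AddSubgroup M)
variable [GradedRing 𝒜] [DirectSum.Decomposition ℳ] [SetLike.GradedSMul 𝒜 ℳ]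

/-- A graded prime submodule `K` of `M` is a graded special
`r`-submodule iff `h(M) ∩ K ⊆ T(M)`. -/
theorem stmt13 [Nontrivial M] (K : Submodule R M) (hK : IsGrPrimeSubmodule 𝒜 ℳ K) :
    IsGrSpecialRSubmodule 𝒜 ℳ K ↔
      ∀ x ∈ K, SetLike.IsHomogeneousElem ℳ x → ∃ r : R, r ≠ 0 ∧ r • x = 0 := by
  obtain ⟨hne, hgr, hpr⟩ := hK
  constructor
  · rintro ⟨-, -, hsp⟩ x hxK hx
    by_contra h
    push_neg at h
    have hann : ∀ r : R, r • x = 0 → r = 0 := by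
      intro r hr
      by_contra hr0
      exact h r hr0 hr
    have h1 : SetLike.IsHomogeneousElem 𝒜 (1 : R) :=
      ⟨0, SetLike.GradedOne.one_mem⟩
    have := hsp 1 x h1 hx (by simpa using hxK) hann
    exact hne (Submodule.eq_top_iff'.2 fun m => by simpa using this m)
  · intro htor
    refine ⟨hne, hgr, fun a x ha hx haxK hann m => ?_⟩
    rcases hpr a x ha hx haxK with hxK | hall
    · obtain ⟨r, hr0, hrx⟩ := htor x hxK hx
      exact absurd (hann r hrx) hr0
    · exact hall m
end

section
/- Let K be a proper graded R-submodule of the graded R-module M. The following are equivalent: (1) K is a graded special r-submodule of M; (2) R·x ∩ K = (K :_R M)·x for every x ∈ h(M) with x ∉ T(M); (3) (K :_R M) = (K :_R x) for every x ∈ h(M) with x ∉ T(M), where (K :_R x) = {r ∈ R : r·x ∈ K}. -/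
/-!
Setting: `R` is a commutative ring graded by a group `ι` (written additively),
`M` is a graded `R`-module.  `𝒜 g` / `ℳ g` are the homogeneous components,
`SetLike.Homogeneous` expresses membership in `h(R)` resp. `h(M)`.
-/

open Pointwise

variable {ι : Type*} [DecidableEq ι] [AddGroup ι]
variable {R : Type*} [CommRing R] {M : Type*} [AddCommGroup M] [Module R M]
variable (𝒜 : ι → AddSubgroup R) (ℳ : ι → AddSubgroup M)
variable [GradedRing 𝒜] [DirectSum.Decomposition ℳ] [SetLike.GradedSMul 𝒜 ℳ]

private lemma comp_smul {g : ι} {x : M} (hx : x ∈ ℳ g) (r : R) (i : ι) :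
    (DirectSum.decompose ℳ (r • x) (i + g) : M) = (DirectSum.decompose 𝒜 r i : R) • x := by
  induction r using DirectSum.Decomposition.inductionOn 𝒜 with
  | zero => simp
  | @homogeneous j a =>
      have hmem : (a : R) • x ∈ ℳ (j + g) := SetLike.GradedSMul.smul_mem a.2 hx
      by_cases h : j = i
      · subst h
        rw [DirectSum.decompose_of_mem_same 𝒜 a.2, DirectSum.decompose_of_mem_same ℳ hmem]
      · rw [DirectSum.decompose_of_mem_ne 𝒜 a.2 h,
            DirectSum.decompose_of_mem_ne ℳ hmem (by simpa using h), zero_smul]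
  | add a b ha hb =>
      rw [add_smul, DirectSum.decompose_add, DirectSum.decompose_add]
      simp only [DirectSum.add_apply, AddSubgroup.coe_add]
      rw [ha, hb, add_smul]

private lemma key14 {K : Submodule R M} (hKgr : IsGradedSub ℳ K)
    (hK : IsGrSpecialRSubmodule 𝒜 ℳ K)
    {x : M} (hx : SetLike.IsHomogeneousElem ℳ x) (hxt : ∀ r : R, r • x = 0 → r = 0)
    {r : R} (hr : r • x ∈ K) : r ∈ K.colon ⊤ := by
  classical
  obtain ⟨g, hxg⟩ := hx
  have hcomp : ∀ i : ι, (DirectSum.decompose 𝒜 r i : R) ∈ K.colon ⊤ := by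
    intro i
    have h1 : (DirectSum.decompose 𝒜 r i : R) • x ∈ K := by
      rw [← comp_smul 𝒜 ℳ hxg r i]; exact hKgr _ hr _
    have := hK.2.2 _ x ⟨i, SetLike.coe_mem _⟩ ⟨g, hxg⟩ h1 hxt
    exact Submodule.mem_colon.mpr fun p _ => this p
  rw [← DirectSum.sum_support_decompose 𝒜 r]
  exact Submodule.sum_mem _ fun i _ => hcomp i

/-- For a proper graded submodule `K` of `M`, the following are
equivalent: (1) `K` is a graded special `r`-submodule; (2) `R • x ∩ K = (K :_R M) • x`
for all homogeneous `x ∉ T(M)`; (3) `(K :_R M) = (K :_R x)` for all homogeneous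
`x ∉ T(M)`. -/
theorem stmt14 [Nontrivial M] (K : Submodule R M) (hKtop : K ≠ ⊤) (hKgr : IsGradedSub ℳ K) :
    (IsGrSpecialRSubmodule 𝒜 ℳ K ↔
      ∀ x : M, SetLike.IsHomogeneousElem ℳ x → (∀ r : R, r • x = 0 → r = 0) →
        Set.range (fun r : R => r • x) ∩ (K : Set M) =
          (fun r : R => r • x) '' (K.colon ⊤ : Set R)) ∧
    (IsGrSpecialRSubmodule 𝒜 ℳ K ↔
      ∀ x : M, SetLike.IsHomogeneousElem ℳ x → (∀ r : R, r • x = 0 → r = 0) →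
        (K.colon ⊤ : Set R) = {r : R | r • x ∈ K}) := by
  have h13 : IsGrSpecialRSubmodule 𝒜 ℳ K ↔
      ∀ x : M, SetLike.IsHomogeneousElem ℳ x → (∀ r : R, r • x = 0 → r = 0) →
        (K.colon ⊤ : Set R) = {r : R | r • x ∈ K} := by
    constructor
    · intro hK x hx hxt
      ext r
      simp only [SetLike.mem_coe, Set.mem_setOf_eq]
      constructor
      · intro hr
        exact Submodule.mem_colon.mp hr x trivial
      · intro hr
        exact key14 𝒜 ℳ hKgr hK hx hxt hr
    · intro h
      refine ⟨hKtop, hKgr, fun a x _ hx hax hxt m => ?_⟩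
      have : a ∈ K.colon ⊤ := by
        have := h x hx hxt
        rw [Set.ext_iff] at this
        exact (this a).mpr hax
      exact Submodule.mem_colon.mp this m trivial
  have h12 : IsGrSpecialRSubmodule 𝒜 ℳ K ↔
      ∀ x : M, SetLike.IsHomogeneousElem ℳ x → (∀ r : R, r • x = 0 → r = 0) →
        Set.range (fun r : R => r • x) ∩ (K : Set M) =
          (fun r : R => r • x) '' (K.colon ⊤ : Set R) := by
    constructor
    · intro hK x hx hxt
      have h3 := h13.mp hK x hx hxt
      ext y
      constructor
      · rintro ⟨⟨r, rfl⟩, hyK⟩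
        refine ⟨r, ?_, rfl⟩
        have : r ∈ ({r : R | r • x ∈ K} : Set R) := hyK
        rwa [← h3] at this
      · rintro ⟨r, hr, rfl⟩
        refine ⟨⟨r, rfl⟩, ?_⟩
        have : r ∈ ({r : R | r • x ∈ K} : Set R) := by rw [← h3]; exact hr
        exact this
    · intro h
      refine ⟨hKtop, hKgr, fun a x _ hx hax hxt m => ?_⟩
      have hmem : a • x ∈ Set.range (fun r : R => r • x) ∩ (K : Set M) :=
        ⟨⟨a, rfl⟩, hax⟩
      rw [h x hx hxt] at hmem
      obtain ⟨r, hr, hrx⟩ := hmem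
      have hrx' : r • x = a • x := hrx
      have : (a - r) • x = 0 := by rw [sub_smul, hrx', sub_self]
      have har : a = r := by have := hxt _ this; linear_combination this
      subst har
      exact Submodule.mem_colon.mp hr m trivial
  exact ⟨h12, h13⟩
end

section
/- Let K be a proper graded R-submodule of the graded R-module M. Then K is a graded special r-submodule of M if and only if the following holds: for every graded R-submodule N of M containing some element of h(M) not in T(M) and every graded ideal I of R with I·N ⊆ K, one has I ⊆ (K :_R M). -/
/-!
Setting: `R` is a commutative ring graded by a group `ι` (written additively),
`M` is a graded `R`-module.  `𝒜 g` / `ℳ g` are the homogeneous components,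
`SetLike.Homogeneous` expresses membership in `h(R)` resp. `h(M)`.
-/

open Pointwise

variable {ι : Type*} [DecidableEq ι] [AddGroup ι]
variable {R : Type*} [CommRing R] {M : Type*} [AddCommGroup M] [Module R M]
variable (𝒜 : ι → AddSubgroup R) (ℳ : ι → AddSubgroup M)
variable [GradedRing 𝒜] [DirectSum.Decomposition ℳ] [SetLike.GradedSMul 𝒜 ℳ]

/-- A proper graded submodule `K` of `M` is a graded special
`r`-submodule iff for every graded submodule `N` of `M` with ... -/

lemma aux_comp_eq {A : Type*} [AddCommGroup A] (P : ι → AddSubgroup A)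
    [DirectSum.Decomposition P] {j : ι} (m : A) (hm : m ∈ P j) (i : ι) :
    (DirectSum.decompose P m i : A) = if i = j then m else 0 := by
  split_ifs with h
  · subst h; exact DirectSum.decompose_of_mem_same P hm
  · exact DirectSum.decompose_of_mem_ne P hm (Ne.symm h)

include 𝒜 in
lemma aux_span_singleton_graded (x : M) (hx : SetLike.IsHomogeneousElem ℳ x) :
    IsGradedSub ℳ (Submodule.span R {x} : Submodule R M) := by
  classical
  intro y hy i
  obtain ⟨r, rfl⟩ := Submodule.mem_span_singleton.1 hy
  obtain ⟨g, hg⟩ := hx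
  have hrx : r • x = ∑ j ∈ (DirectSum.decompose 𝒜 r).support,
      ((DirectSum.decompose 𝒜 r j : R) • x) := by
    conv_lhs => rw [← DirectSum.sum_support_decompose 𝒜 r]
    rw [Finset.sum_smul]
  rw [hrx, DirectSum.decompose_sum, DFinsupp.finset_sum_apply, AddSubmonoidClass.coe_finset_sum]
  refine Submodule.sum_mem _ fun j _ => ?_
  have hmem : (DirectSum.decompose 𝒜 r j : R) • x ∈ ℳ (j + g) :=
    by exact SetLike.GradedSMul.smul_mem (A := 𝒜) (SetLike.coe_mem _) hg
  rw [aux_comp_eq ℳ _ hmem]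
  split_ifs
  · exact Submodule.smul_mem _ _ (Submodule.mem_span_singleton_self x)
  · exact Submodule.zero_mem _

lemma aux_ideal_span_singleton_graded (a : R) (ha : SetLike.IsHomogeneousElem 𝒜 a) :
    IsGradedIdl 𝒜 (Ideal.span {a}) := by
  classical
  intro y hy i
  obtain ⟨r, rfl⟩ := Ideal.mem_span_singleton'.1 hy
  obtain ⟨g, hg⟩ := ha
  have hrx : r * a = ∑ j ∈ (DirectSum.decompose 𝒜 r).support,
      ((DirectSum.decompose 𝒜 r j : R) * a) := by
    conv_lhs => rw [← DirectSum.sum_support_decompose 𝒜 r]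
    rw [Finset.sum_mul]
  rw [hrx, DirectSum.decompose_sum, DFinsupp.finset_sum_apply, AddSubmonoidClass.coe_finset_sum]
  refine Submodule.sum_mem _ fun j _ => ?_
  have hmem : (DirectSum.decompose 𝒜 r j : R) * a ∈ 𝒜 (j + g) :=
    SetLike.mul_mem_graded (SetLike.coe_mem _) hg
  rw [aux_comp_eq 𝒜 _ hmem]
  split_ifs
  · exact Ideal.mul_mem_left _ _ (Ideal.subset_span rfl)
  · exact Submodule.zero_mem _

/-- A proper graded submodule `K` of `M` is a graded special
`r`-submodule iff for every graded submodule `N` of `M` with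
`N ∩ (h(M) - T(M)) ≠ ∅` and every graded ideal `I` of `R` with `I • N ⊆ K`,
one has `I ⊆ (K :_R M)`. -/
theorem stmt15 [Nontrivial M] (K : Submodule R M) (hKtop : K ≠ ⊤) (hKgr : IsGradedSub ℳ K) :
    IsGrSpecialRSubmodule 𝒜 ℳ K ↔
      ∀ (N : Submodule R M) (I : Ideal R), IsGradedSub ℳ N → IsGradedIdl 𝒜 I →
        (∃ x ∈ N, SetLike.IsHomogeneousElem ℳ x ∧ ∀ r : R, r • x = 0 → r = 0) →
        I • N ≤ K → ∀ a ∈ I, ∀ m : M, a • m ∈ K := by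
  classical
  constructor
  · rintro ⟨-, -, hspec⟩ N I hN hI ⟨x, hxN, hxhom, hxann⟩ hIN a ha m
    have key : ∀ i, (DirectSum.decompose 𝒜 a i : R) • m ∈ K := by
      intro i
      have hai : (DirectSum.decompose 𝒜 a i : R) ∈ I := hI a ha i
      have hax : (DirectSum.decompose 𝒜 a i : R) • x ∈ K :=
        hIN (Submodule.smul_mem_smul hai hxN)
      exact hspec _ x ⟨i, SetLike.coe_mem _⟩ hxhom hax hxann m
    have : a • m = ∑ i ∈ (DirectSum.decompose 𝒜 a).support,
        ((DirectSum.decompose 𝒜 a i : R) • m) := by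
      conv_lhs => rw [← DirectSum.sum_support_decompose 𝒜 a]
      rw [Finset.sum_smul]
    rw [this]
    exact Submodule.sum_mem _ fun i _ => key i
  · intro h
    refine ⟨hKtop, hKgr, ?_⟩
    intro a x ha hx haxK hxann m
    refine h (Submodule.span R {x}) (Ideal.span {a})
      (aux_span_singleton_graded 𝒜 ℳ x hx) (aux_ideal_span_singleton_graded 𝒜 a ha)
      ⟨x, Submodule.mem_span_singleton_self x, hx, hxann⟩ ?_ a (Ideal.subset_span rfl) m
    rw [Submodule.smul_le]
    rintro r hr n hn
    obtain ⟨c, rfl⟩ := Ideal.mem_span_singleton'.1 hr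
    obtain ⟨d, rfl⟩ := Submodule.mem_span_singleton.1 hn
    have : (c * a) • (d • x) = (c * d) • (a • x) := by
      rw [smul_smul, smul_smul, mul_assoc, mul_comm a d, ← mul_assoc]
    rw [this]
    exact Submodule.smul_mem _ _ haxK
end

section
/- Let K be a graded special r-submodule of the graded R-module M and let r ∈ h(R) with r ∉ (K :_R M). Then (K :_M r) = {m ∈ M : r·m ∈ K} is a graded special r-submodule of M. -/
/-!
Setting: `R` is a commutative ring graded by a group `ι` (written additively),
`M` is a graded `R`-module.  `𝒜 g` / `ℳ g` are the homogeneous components,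
`SetLike.Homogeneous` expresses membership in `h(R)` resp. `h(M)`.
-/

open Pointwise

variable {ι : Type*} [DecidableEq ι] [AddGroup ι]
variable {R : Type*} [CommRing R] {M : Type*} [AddCommGroup M] [Module R M]
variable (𝒜 : ι → AddSubgroup R) (ℳ : ι → AddSubgroup M)
variable [GradedRing 𝒜] [DirectSum.Decomposition ℳ] [SetLike.GradedSMul 𝒜 ℳ]

/-- The residual `(K :_M r) = {m ∈ M : r • m ∈ K}` as a submodule of `M`. -/
def colonMod (K : Submodule R M) (r : R) : Submodule R M where
  carrier := {m : M | r • m ∈ K}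
  add_mem' := by
    intro x y hx hy
    simp only [Set.mem_setOf_eq, smul_add] at *
    exact K.add_mem hx hy
  zero_mem' := by simp
  smul_mem' := by
    intro c x hx
    simp only [Set.mem_setOf_eq] at *
    rw [smul_comm]
    exact K.smul_mem c hx

lemma decompose_smul_of_mem {g : ι} {r : R} (hr : r ∈ 𝒜 g) (x : M) (i : ι) :
    (DirectSum.decompose ℳ (r • x) (g + i) : M) = r • (DirectSum.decompose ℳ x i : M) := by
  induction x using DirectSum.Decomposition.inductionOn ℳ with
  | zero => simp
  | homogeneous m =>
    rename_i j
    obtain ⟨m, hm⟩ := m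
    have hrm : r • m ∈ ℳ (g + j) := SetLike.GradedSMul.smul_mem hr hm
    by_cases hij : j = i
    · subst hij
      rw [DirectSum.decompose_of_mem_same ℳ hrm, DirectSum.decompose_of_mem_same ℳ hm]
    · rw [DirectSum.decompose_of_mem_ne ℳ hrm (by simpa using hij),
        DirectSum.decompose_of_mem_ne ℳ hm hij, smul_zero]
  | add x y hx hy =>
    rw [smul_add, DirectSum.decompose_add, DirectSum.decompose_add]
    simp only [DirectSum.add_apply, AddSubgroup.coe_add, hx, hy, smul_add]

/-- If `K` is a graded special `r`-submodule of `M` and `r ∈ h(R)`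
with `r ∉ (K :_R M)`, then `(K :_M r)` is a graded special `r`-submodule of `M`. -/
theorem stmt16 [Nontrivial M] (K : Submodule R M) (hK : IsGrSpecialRSubmodule 𝒜 ℳ K)
    (r : R) (hr : SetLike.IsHomogeneousElem 𝒜 r) (hrK : ¬ ∀ m : M, r • m ∈ K) :
    IsGrSpecialRSubmodule 𝒜 ℳ (colonMod K r) := by
  obtain ⟨g, hrg⟩ := hr
  refine ⟨?_, ?_, ?_⟩
  · intro h
    exact hrK fun m => (Submodule.eq_top_iff'.mp h m : r • m ∈ K)
  · intro x hx i
    have h := hK.2.1 (r • x) hx (g + i)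
    rwa [decompose_smul_of_mem 𝒜 ℳ hrg] at h
  · intro a x ha hx hax hann m
    have h1 : (a * r) • x ∈ K := by
      rw [mul_smul]
      have : r • (a • x) ∈ K := hax
      rwa [smul_comm] at this
    have h2 := hK.2.2 (a * r) x (SetLike.IsHomogeneousElem.mul ha ⟨g, hrg⟩) hx h1 hann m
    show r • (a • m) ∈ K
    rwa [smul_comm, ← mul_smul]
end

section
/- Let K be a graded special r-submodule of the graded R-module M that is maximal (with respect to inclusion) among all graded special r-submodules of M. Then K is a graded prime R-submodule of M. -/
/-!
Setting: `R` is a commutative ring graded by a group `ι` (written additively),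
`M` is a graded `R`-module.  `𝒜 g` / `ℳ g` are the homogeneous components,
`SetLike.Homogeneous` expresses membership in `h(R)` resp. `h(M)`.
-/

open Pointwise

variable {ι : Type*} [DecidableEq ι] [AddGroup ι]
variable {R : Type*} [CommRing R] {M : Type*} [AddCommGroup M] [Module R M]
variable (𝒜 : ι → AddSubgroup R) (ℳ : ι → AddSubgroup M)
variable [GradedRing 𝒜] [DirectSum.Decomposition ℳ] [SetLike.GradedSMul 𝒜 ℳ]

theorem aux_decompose_smul {g : ι} {a : R} (ha : a ∈ 𝒜 g) (m : M) (j : ι) :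
    (DirectSum.decompose ℳ (a • m) (g + j) : M) = a • (DirectSum.decompose ℳ m j : M) := by
  induction m using DirectSum.Decomposition.inductionOn ℳ with
  | zero => simp
  | @homogeneous i x =>
    obtain ⟨x, hx⟩ := x
    have hax : a • x ∈ ℳ (g + i) := SetLike.GradedSMul.smul_mem ha hx
    by_cases hij : j = i
    · subst hij
      rw [DirectSum.decompose_of_mem_same ℳ hax, DirectSum.decompose_of_mem_same ℳ hx]
    · rw [DirectSum.decompose_of_mem_ne ℳ hax (by simpa using (Ne.symm hij)),
        DirectSum.decompose_of_mem_ne ℳ hx (Ne.symm hij), smul_zero]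
  | add x y hx hy =>
    rw [smul_add, DirectSum.decompose_add, DirectSum.decompose_add]
    simp only [DirectSum.add_apply, AddSubgroup.coe_add, hx, hy, smul_add]

/-- A graded special `r`-submodule of `M` that is maximal among the
graded special `r`-submodules of `M` is a graded prime submodule of `M`. -/
theorem stmt17 [Nontrivial M] (K : Submodule R M) (hK : IsGrSpecialRSubmodule 𝒜 ℳ K)
    (hmax : ∀ L : Submodule R M, IsGrSpecialRSubmodule 𝒜 ℳ L → K ≤ L → L = K) :
    IsGrPrimeSubmodule 𝒜 ℳ K := by
  obtain ⟨hKne, hKgr, hKsp⟩ := hK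
  refine ⟨hKne, hKgr, fun a x ha hx hax => ?_⟩
  by_cases hall : ∀ m : M, a • m ∈ K
  · exact Or.inr hall
  left
  -- consider L = (K : a) = {m | a • m ∈ K}
  set L : Submodule R M := K.comap (LinearMap.lsmul R M a) with hL
  have hmemL : ∀ m : M, m ∈ L ↔ a • m ∈ K := fun m => Iff.rfl
  have hKL : K ≤ L := fun k hk => K.smul_mem a hk
  have hLne : L ≠ ⊤ := by
    intro h
    apply hall
    intro m
    have : m ∈ L := h ▸ Submodule.mem_top
    exact this
  obtain ⟨g, hag⟩ := ha
  have hLgr : IsGradedSub ℳ L := by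
    intro m hm i
    have h1 : a • m ∈ K := hm
    have h2 := hKgr _ h1 (g + i)
    rw [aux_decompose_smul 𝒜 ℳ hag m i] at h2
    exact h2
  have hLsp : ∀ b : R, ∀ y : M, SetLike.IsHomogeneousElem 𝒜 b → SetLike.IsHomogeneousElem ℳ y →
      b • y ∈ L → (∀ r : R, r • y = 0 → r = 0) → ∀ m : M, b • m ∈ L := by
    intro b y hb hy hby hann m
    obtain ⟨h, hbh⟩ := hb
    have hab : SetLike.IsHomogeneousElem 𝒜 (a * b) :=
      ⟨g + h, SetLike.GradedMul.mul_mem hag hbh⟩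
    have h1 : (a * b) • y ∈ K := by
      rw [mul_smul]
      exact hby
    have := hKsp (a * b) y hab hy h1 hann m
    rw [mul_smul] at this
    exact this
  have := hmax L ⟨hLne, hLgr, hLsp⟩ hKL
  rw [← this]
  exact hax
end

section
/- Every proper graded R-submodule of the graded R-module M is a graded special r-submodule of M if and only if either h(M) ⊆ T(M), or R·x = M for every x ∈ h(M) with x ∉ T(M). -/
/-!
Setting: `R` is a commutative ring graded by a group `ι` (written additively),
`M` is a graded `R`-module.  `𝒜 g` / `ℳ g` are the homogeneous components,
`SetLike.IsHomogeneousElem` expresses membership in `h(R)` resp. `h(M)`.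
-/

open Pointwise

variable {ι : Type*} [DecidableEq ι] [AddGroup ι]
variable {R : Type*} [CommRing R] {M : Type*} [AddCommGroup M] [Module R M]
variable (𝒜 : ι → AddSubgroup R) (ℳ : ι → AddSubgroup M)
variable [GradedRing 𝒜] [DirectSum.Decomposition ℳ] [SetLike.GradedSMul 𝒜 ℳ]

/-- Every proper graded submodule of `M` is a graded special
`r`-submodule iff `h(M) ⊆ T(M)` or `R • x = M` for every homogeneous `x ∉ T(M)`. -/
theorem stmt18 [Nontrivial M] :
    (∀ K : Submodule R M, K ≠ ⊤ → IsGradedSub ℳ K → IsGrSpecialRSubmodule 𝒜 ℳ K) ↔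
      ((∀ x : M, SetLike.IsHomogeneousElem ℳ x → ∃ r : R, r ≠ 0 ∧ r • x = 0) ∨
        ∀ x : M, SetLike.IsHomogeneousElem ℳ x → (∀ r : R, r • x = 0 → r = 0) →
          Submodule.span R {x} = ⊤) := by
  constructor
  · intro h
    right
    intro x hx hann
    by_contra hne
    obtain ⟨g, hxg⟩ := hx
    have hgr : IsGradedSub ℳ (Submodule.span R {x}) := by
      intro y hy i
      obtain ⟨r, rfl⟩ := Submodule.mem_span_singleton.mp hy
      induction r using DirectSum.Decomposition.inductionOn 𝒜 with
      | zero => simp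
      | @homogeneous j rj =>
        have hmem : (rj : R) • x ∈ ℳ (j + g) := SetLike.GradedSMul.smul_mem rj.2 hxg
        by_cases hij : i = j + g
        · subst hij
          rw [DirectSum.decompose_of_mem_same ℳ hmem]
          exact Submodule.smul_mem _ _ (Submodule.mem_span_singleton_self x)
        · rw [DirectSum.decompose_of_mem_ne ℳ hmem (fun hh => hij hh.symm)]
          exact Submodule.zero_mem _
      | add r s hr hs =>
        rw [add_smul, DirectSum.decompose_add]
        have hmr : r • x ∈ Submodule.span R {x} :=
          Submodule.smul_mem _ r (Submodule.mem_span_singleton_self x)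
        have hms : s • x ∈ Submodule.span R {x} :=
          Submodule.smul_mem _ s (Submodule.mem_span_singleton_self x)
        exact Submodule.add_mem _ (hr hmr) (hs hms)
    obtain ⟨_, _, hsp⟩ := h (Submodule.span R {x}) hne hgr
    have h1 := hsp 1 x (SetLike.isHomogeneousElem_one 𝒜) ⟨g, hxg⟩
      (by simpa using Submodule.mem_span_singleton_self x) hann
    apply hne
    rw [eq_top_iff]
    intro m _
    simpa using h1 m
  · rintro h K hKt hKgr
    refine ⟨hKt, hKgr, ?_⟩
    intro a x ha hx haxK hann m
    rcases h with h1 | h2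
    · obtain ⟨r, hr0, hrx⟩ := h1 x hx
      exact absurd (hann r hrx) hr0
    · have hm : m ∈ Submodule.span R {x} := (h2 x hx hann) ▸ Submodule.mem_top
      obtain ⟨r, rfl⟩ := Submodule.mem_span_singleton.mp hm
      rw [smul_comm]
      exact K.smul_mem r haxK
end

section
/- Suppose the zero submodule {0} is the only graded special r-submodule of the graded R-module M and M is homogeneous faithful (r·M ≠ {0} for every nonzero r ∈ h(R)). Then M is homogeneous torsion free, i.e., whenever r ∈ h(R) and x ∈ h(M) satisfy r·x = 0, then r = 0 or x = 0. -/
/-!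
Setting: `R` is a commutative ring graded by a group `ι` (written additively),
`M` is a graded `R`-module.  `𝒜 g` / `ℳ g` are the homogeneous components,
`SetLike.Homogeneous` expresses membership in `h(R)` resp. `h(M)`.
-/

open Pointwise

variable {ι : Type*} [DecidableEq ι] [AddGroup ι]
variable {R : Type*} [CommRing R] {M : Type*} [AddCommGroup M] [Module R M]
variable (𝒜 : ι → AddSubgroup R) (ℳ : ι → AddSubgroup M)
variable [GradedRing 𝒜] [DirectSum.Decomposition ℳ] [SetLike.GradedSMul 𝒜 ℳ]

lemma coe_decompose_smul_add_of_left_mem' {g : ι} {r : R} (hr : r ∈ 𝒜 g) (m : M) (i : ι) :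
    (DirectSum.decompose ℳ (r • m) (g + i) : M) = r • (DirectSum.decompose ℳ m i : M) := by
  induction m using DirectSum.Decomposition.inductionOn ℳ with
  | zero => simp
  | @homogeneous j x =>
    have hmem : r • (x : M) ∈ ℳ (g + j) := by
      simpa only [vadd_eq_add] using SetLike.GradedSMul.smul_mem hr x.2
    rcases eq_or_ne i j with rfl | hij
    · rw [DirectSum.decompose_of_mem_same ℳ x.2,
        DirectSum.decompose_of_mem_same ℳ hmem]
    · rw [DirectSum.decompose_of_mem_ne ℳ x.2 (Ne.symm hij),
        DirectSum.decompose_of_mem_ne ℳ hmem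
          (by simpa using (Ne.symm hij)), smul_zero]
  | add x y hx hy =>
    rw [smul_add, DirectSum.decompose_add, DirectSum.decompose_add]
    simp only [DirectSum.add_apply, AddSubgroup.coe_add]
    rw [hx, hy, smul_add]

lemma smul_decompose_eq_zero' {g : ι} {r : R} (hr : r ∈ 𝒜 g) {m : M}
    (hm : r • m = 0) (i : ι) : r • (DirectSum.decompose ℳ m i : M) = 0 := by
  rw [← coe_decompose_smul_add_of_left_mem' 𝒜 ℳ hr m i, hm]
  simp

/-- If the zero submodule is the only graded special `r`-submodule of
`M` and `M` is homogeneous faithful, then `M` is homogeneous torsion free. -/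
theorem stmt19 [Nontrivial M]
    (h : ∀ K : Submodule R M, IsGrSpecialRSubmodule 𝒜 ℳ K ↔ K = ⊥)
    (hfaith : ∀ r : R, SetLike.IsHomogeneousElem 𝒜 r → r ≠ 0 → ∃ m : M, r • m ≠ 0) :
    ∀ (r : R) (x : M), SetLike.IsHomogeneousElem 𝒜 r → SetLike.IsHomogeneousElem ℳ x →
      r • x = 0 → r = 0 ∨ x = 0 := by
  intro r x hr hx hrx
  by_cases hr0 : r = 0
  · exact Or.inl hr0
  right
  obtain ⟨g, hg⟩ := hr
  set K : Submodule R M := LinearMap.ker (LinearMap.lsmul R M r) with hK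
  have hmemK : ∀ m : M, m ∈ K ↔ r • m = 0 := fun m => by
    simp [hK, LinearMap.mem_ker]
  have hKspec : IsGrSpecialRSubmodule 𝒜 ℳ K := by
    refine ⟨?_, ?_, ?_⟩
    · intro htop
      obtain ⟨m, hm⟩ := hfaith r ⟨g, hg⟩ hr0
      exact hm ((hmemK m).mp (htop ▸ Submodule.mem_top))
    · intro m hm i
      exact (hmemK _).mpr (smul_decompose_eq_zero' 𝒜 ℳ hg ((hmemK m).mp hm) i)
    · intro a y _ _ hay hann m
      have h1 : (r * a) • y = 0 := by
        rw [mul_smul]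
        exact (hmemK _).mp hay
      have h2 : r * a = 0 := hann _ h1
      rw [hmemK, ← mul_smul, h2, zero_smul]
  have hKbot : K = ⊥ := (h K).mp hKspec
  have : x ∈ K := (hmemK x).mpr hrx
  rwa [hKbot, Submodule.mem_bot] at this
end
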